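/- Let μ be a σ-finite measure on a measurable space, let φ be a measurable function with φ > 0 μ-almost everywhere and ∫ φ dμ < ∞, let p, q > 1 satisfy 1/p + 1/q = 1, and let M ≥ 0. Then the set K = { f ∈ L¹(μ) : ∫ |f|^p · φ^{-p/q} dμ ≤ M } is relatively compact in L¹(μ) endowed with the weak topology σ(L¹, L^∞). -/

import Mathlib

open MeasureTheory NormedSpace Metric Pointwise ENNReal
open scoped NNReal

section Aux

/-- A helper real inequality for the truncation estimate. -/
theorem real_trunc_ineq {p q lam t c : ℝ} (hp : 1 < p) (hpq2 : p / q = p - 1)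
    (hl : 0 < lam) (hc : 0 < c) (ht : lam * c < t) :
    t ≤ lam ^ (1 - p) * (t ^ p * c ^ (-(p / q))) := by
  have hs : 0 < p - 1 := by linarith
  have hlc : 0 < lam * c := mul_pos hl hc
  have ht0 : 0 < t := lt_trans hlc ht
  have h1 : (lam * c) ^ (p - 1) ≤ t ^ (p - 1) := Real.rpow_le_rpow hlc.le ht.le hs.le
  have hlcp : 0 < (lam * c) ^ (p - 1) := Real.rpow_pos_of_pos hlc _
  have htp : t ^ p = t * t ^ (p - 1) := by
    have h2 := Real.rpow_add ht0 1 (p - 1)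
    rw [show (1 : ℝ) + (p - 1) = p by ring] at h2
    rw [h2, Real.rpow_one]
  have hln0 : lam ^ (p - 1) ≠ 0 := (Real.rpow_pos_of_pos hl _).ne'
  have hcn0 : c ^ (p - 1) ≠ 0 := (Real.rpow_pos_of_pos hc _).ne'
  calc t = t * 1 := (mul_one t).symm
    _ ≤ t * (t ^ (p - 1) / (lam * c) ^ (p - 1)) := by
        apply mul_le_mul_of_nonneg_left _ ht0.le
        rw [le_div_iff₀ hlcp, one_mul]
        exact h1
    _ = lam ^ (1 - p) * (t ^ p * c ^ (-(p / q))) := by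
        rw [hpq2, htp, Real.rpow_neg hc.le, show (1 : ℝ) - p = -(p - 1) by ring,
          Real.rpow_neg hl.le, Real.mul_rpow hl.le hc.le]
        field_simp

theorem weakClosure_isCompact_of_approx {E : Type*} [NormedAddCommGroup E] [NormedSpace ℝ E]
    [CompleteSpace E] (K : Set (WeakSpace ℝ E))
    (happ : ∀ ε : ℝ, 0 < ε → ∃ C : Set (WeakSpace ℝ E), IsCompact C ∧
      ∀ f ∈ K, ∃ g ∈ C, ‖(toWeakSpace ℝ E).symm f - (toWeakSpace ℝ E).symm g‖ ≤ ε) :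
    IsCompact (closure K) := by
  classical
  let Jli : E →ₗᵢ[ℝ] StrongDual ℝ (StrongDual ℝ E) := inclusionInDoubleDualLi ℝ (E := E)
  let J' : WeakSpace ℝ E → WeakDual ℝ (StrongDual ℝ E) :=
    fun f => StrongDual.toWeakDual (Jli ((toWeakSpace ℝ E).symm f))
  have hJ'cont : Continuous J' := by
    apply WeakDual.continuous_of_continuous_eval
    intro y
    have : (fun f : WeakSpace ℝ E => (J' f) y)
        = fun f : WeakSpace ℝ E => ((topDualPairing ℝ E).flip f) y := rfl
    rw [this]
    exact WeakBilin.eval_continuous ((topDualPairing ℝ E).flip) y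
  have hJ'inj : Function.Injective J' := by
    intro a b hab
    have h1 : Jli ((toWeakSpace ℝ E).symm a) = Jli ((toWeakSpace ℝ E).symm b) :=
      StrongDual.toWeakDual.injective hab
    exact (toWeakSpace ℝ E).symm.injective (Jli.injective h1)
  have key : ∀ ε : ℝ, 0 < ε → ∃ Ch : Set (WeakDual ℝ (StrongDual ℝ E)), IsCompact Ch ∧
      J' '' K ⊆ Ch ∧ ∀ ξ ∈ Ch, ∃ c : E, ‖WeakDual.toStrongDual ξ - Jli c‖ ≤ ε := by
    intro ε hε
    obtain ⟨C, hCcpt, hCapp⟩ := happ ε hε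
    refine ⟨J' '' C + (WeakDual.toStrongDual (𝕜 := ℝ) (E := StrongDual ℝ E)) ⁻¹' closedBall 0 ε,
      ?_, ?_, ?_⟩
    · exact (hCcpt.image hJ'cont).add (WeakDual.isCompact_closedBall (𝕜 := ℝ) (E := StrongDual ℝ E) 0 ε)
    · rintro - ⟨f, hf, rfl⟩
      obtain ⟨g, hg, hfg⟩ := hCapp f hf
      refine ⟨J' g, ⟨g, hg, rfl⟩, J' f - J' g, ?_, by module⟩
      simp only [Set.mem_preimage, mem_closedBall, dist_zero_right]
      have : WeakDual.toStrongDual (J' f - J' g)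
          = Jli ((toWeakSpace ℝ E).symm f) - Jli ((toWeakSpace ℝ E).symm g) := rfl
      refine (mem_closedBall_zero_iff (a := WeakDual.toStrongDual (J' f - J' g))).2 ?_
      rw [this, ← Jli.map_sub, Jli.norm_map]
      exact hfg
    · rintro ξ ⟨a, ⟨g, hg, rfl⟩, b, hb, rfl⟩
      refine ⟨(toWeakSpace ℝ E).symm g, ?_⟩
      have : WeakDual.toStrongDual (J' g + b) - Jli ((toWeakSpace ℝ E).symm g)
          = WeakDual.toStrongDual b := by
        have h0 : WeakDual.toStrongDual (J' g) = Jli ((toWeakSpace ℝ E).symm g) := rfl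
        simp only [map_add, h0]
        abel
      rw [this]
      exact (mem_closedBall_zero_iff (a := WeakDual.toStrongDual b)).1 hb
  set Sh := closure (J' '' K) with hSh
  obtain ⟨C1, hC1cpt, hKC1, -⟩ := key 1 one_pos
  have hShcpt : IsCompact Sh :=
    hC1cpt.of_isClosed_subset isClosed_closure (closure_minimal hKC1 hC1cpt.isClosed)
  have hrange : ∀ ξ ∈ Sh, ∃ x : E, Jli x = WeakDual.toStrongDual ξ := by
    intro ξ hξ
    have hcl : WeakDual.toStrongDual ξ ∈ closure (Set.range ⇑Jli) := by
      rw [Metric.mem_closure_iff (α := StrongDual ℝ (StrongDual ℝ E))]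
      intro ε hε
      obtain ⟨Ch, hcpt, hsub, happrox⟩ := key (ε/2) (by positivity)
      have hξCh : ξ ∈ Ch := closure_minimal hsub hcpt.isClosed hξ
      obtain ⟨c, hc⟩ := happrox ξ hξCh
      refine ⟨Jli c, ⟨c, rfl⟩, ?_⟩
      rw [dist_eq_norm (WeakDual.toStrongDual ξ) (Jli c)]
      calc ‖WeakDual.toStrongDual ξ - Jli c‖ ≤ ε/2 := hc
        _ < ε := by linarith
    have hclosed : IsClosed (Set.range ⇑Jli) :=
      Jli.isometry.isUniformInducing.isComplete_range.isClosed
    rw [hclosed.closure_eq] at hcl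
    obtain ⟨x, hx⟩ := hcl
    exact ⟨x, hx⟩
  let e : WeakDual ℝ (StrongDual ℝ E) → WeakSpace ℝ E :=
    fun ξ => toWeakSpace ℝ E (Function.invFun (⇑Jli) (WeakDual.toStrongDual ξ))
  have he : ∀ ξ ∈ Sh, J' (e ξ) = ξ := by
    intro ξ hξ
    obtain ⟨x, hx⟩ := hrange ξ hξ
    have hinv : Function.invFun (⇑Jli) (WeakDual.toStrongDual ξ) = x := by
      rw [← hx]; exact Function.leftInverse_invFun Jli.injective x
    show StrongDual.toWeakDual (Jli ((toWeakSpace ℝ E).symm (toWeakSpace ℝ E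
      (Function.invFun (⇑Jli) (WeakDual.toStrongDual ξ))))) = ξ
    rw [LinearEquiv.symm_apply_apply, hinv, hx]
    rfl
  have hecont : ContinuousOn e Sh := by
    rw [continuousOn_iff_continuous_restrict]
    apply WeakBilin.continuous_of_continuous_eval
    intro y
    have heq : (fun s : Sh => (topDualPairing ℝ E).flip (Sh.restrict e s) y)
        = fun s : Sh => (s : WeakDual ℝ (StrongDual ℝ E)) y := by
      funext s
      have h1 : (topDualPairing ℝ E).flip (Sh.restrict e s) y = (J' (e s.1)) y := rfl
      rw [h1, he s.1 s.2]
    refine (continuous_congr (congrFun heq)).2 ?_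
    exact (WeakDual.eval_continuous y).comp continuous_subtype_val
  have himg : IsCompact (e '' Sh) := hShcpt.image_of_continuousOn hecont
  refine himg.of_isClosed_subset isClosed_closure ?_
  intro x hx
  have hJx : J' x ∈ Sh := image_closure_subset_closure_image hJ'cont ⟨x, hx, rfl⟩
  refine ⟨J' x, hJx, ?_⟩
  exact hJ'inj (he _ hJx)

theorem exists_weakCompact_superset_ball {H : Type*} [NormedAddCommGroup H]
    [InnerProductSpace ℝ H] [CompleteSpace H] (r : ℝ) :
    ∃ S : Set (WeakSpace ℝ H), IsCompact S ∧ ∀ h : H, ‖h‖ ≤ r → toWeakSpace ℝ H h ∈ S := by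
  classical
  let d := InnerProductSpace.toDual ℝ H
  let m : WeakDual ℝ H → WeakSpace ℝ H :=
    fun ψ => toWeakSpace ℝ H (d.symm (WeakDual.toStrongDual ψ))
  have hmcont : Continuous m := by
    apply WeakBilin.continuous_of_continuous_eval
    intro l
    have heq : (fun ψ : WeakDual ℝ H => ((topDualPairing ℝ H).flip (m ψ)) l)
        = fun ψ : WeakDual ℝ H => ψ (d.symm l) := by
      funext ψ
      show l (d.symm (WeakDual.toStrongDual ψ)) = (WeakDual.toStrongDual ψ) (d.symm l)
      rw [← InnerProductSpace.toDual_symm_apply (y := l),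
        real_inner_comm, InnerProductSpace.toDual_symm_apply]
    rw [heq]
    exact WeakDual.eval_continuous _
  refine ⟨m '' ((WeakDual.toStrongDual (𝕜 := ℝ) (E := H)) ⁻¹' Metric.closedBall 0 r),
    (WeakDual.isCompact_closedBall (𝕜 := ℝ) (E := H) 0 r).image hmcont, ?_⟩
  intro h hh
  refine ⟨StrongDual.toWeakDual (d h), ?_, ?_⟩
  · simp only [Set.mem_preimage, Metric.mem_closedBall, dist_zero_right]
    show ‖d h‖ ≤ r
    rw [d.norm_map]
    exact hh
  · show toWeakSpace ℝ H (d.symm (d h)) = toWeakSpace ℝ H h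
    rw [LinearIsometryEquiv.symm_apply_apply]

end Aux

/-- Lemma 3 of the paper (Dunford–Schwartz criterion): for a σ-finite measure `μ`,
a measurable `φ` with `φ > 0` a.e. and `∫ φ dμ < ∞`, conjugate exponents
`p, q > 1` and `M ≥ 0`, the set
`K = { f ∈ L¹(μ) : ∫ |f|^p φ^{-p/q} dμ ≤ M }` is relatively compact in `L¹(μ)`
endowed with the weak topology `σ(L¹, L^∞)`. -/
theorem stmt_0 {α : Type*} [MeasurableSpace α] (μ : Measure α) [SigmaFinite μ]
    (φ : α → ℝ) (hφm : Measurable φ) (hφpos : ∀ᵐ x ∂μ, 0 < φ x)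
    (hφint : Integrable φ μ)
    (p q M : ℝ) (hp : 1 < p) (hq : 1 < q) (hpq : 1 / p + 1 / q = 1) (hM : 0 ≤ M) :
    IsCompact (@closure (WeakSpace ℝ (Lp ℝ 1 μ)) _
      {f : Lp ℝ 1 μ |
        ∫⁻ x, ENNReal.ofReal (|f x| ^ p * φ x ^ (-(p / q))) ∂μ ≤ ENNReal.ofReal M}) := by
  classical
  have hp0 : (0:ℝ) < p := by linarith
  have hq0 : (0:ℝ) < q := by linarith
  have hpq2 : p / q = p - 1 := by
    field_simp at hpq
    field_simp
    linear_combination hpq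
  set φn : α → ℝ≥0 := fun x => (φ x).toNNReal with hφn
  have hφnm : Measurable φn := hφm.real_toNNReal
  set ν : Measure α := μ.withDensity (fun x => (φn x : ℝ≥0∞)) with hν
  haveI hfin : IsFiniteMeasure ν := by
    constructor
    rw [hν, withDensity_apply _ MeasurableSet.univ, setLIntegral_univ]
    calc ∫⁻ x, (φn x : ℝ≥0∞) ∂μ ≤ ∫⁻ x, (‖φ x‖₊ : ℝ≥0∞) ∂μ := by
          apply lintegral_mono
          intro x
          show ((φ x).toNNReal : ℝ≥0∞) ≤ (‖φ x‖₊ : ℝ≥0∞)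
          rw [← enorm_eq_nnnorm, Real.enorm_eq_ofReal_abs]
          exact ENNReal.ofReal_le_ofReal (le_abs_self _)
      _ < ∞ := hφint.hasFiniteIntegral
  -- the inclusion L²(ν) → L¹(ν)
  have hmem : ∀ h : Lp ℝ 2 ν, MemLp (⇑h) 1 ν :=
    fun h => (Lp.memLp h).mono_exponent (by norm_num)
  let i2lin : Lp ℝ 2 ν →ₗ[ℝ] Lp ℝ 1 ν :=
    { toFun := fun h => (hmem h).toLp ⇑h
      map_add' := by
        intro h g
        rw [← MemLp.toLp_add (hmem h) (hmem g)]
        exact MemLp.toLp_congr _ _ (Lp.coeFn_add h g)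
      map_smul' := by
        intro c h
        simp only [RingHom.id_apply]
        rw [MemLp.toLp_congr (hmem (c • h)) ((hmem h).const_smul c) (Lp.coeFn_smul c h),
          MemLp.toLp_const_smul] }
  have hi2bound : ∀ h : Lp ℝ 2 ν, ‖i2lin h‖ ≤ ((ν Set.univ).toReal ^ ((2:ℝ)⁻¹)) * ‖h‖ := by
    intro h
    have h1 : eLpNorm (⇑h) 1 ν ≤ eLpNorm (⇑h) 2 ν * (ν Set.univ) ^ ((1:ℝ)/1 - 1/2) := by
      simpa using eLpNorm_le_eLpNorm_mul_rpow_measure_univ (p := (1:ℝ≥0∞)) (q := (2:ℝ≥0∞))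
        (by norm_num) (Lp.aestronglyMeasurable h)
    have h2 : ‖i2lin h‖ = (eLpNorm (⇑h) 1 ν).toReal := Lp.norm_toLp _ (hmem h)
    rw [h2]
    calc (eLpNorm (⇑h) 1 ν).toReal
        ≤ (eLpNorm (⇑h) 2 ν * (ν Set.univ) ^ ((1:ℝ)/1 - 1/2)).toReal := by
          apply ENNReal.toReal_mono _ h1
          exact ENNReal.mul_ne_top (Lp.eLpNorm_ne_top h)
            (ENNReal.rpow_ne_top_of_nonneg (by norm_num) (measure_ne_top ν _))
      _ = ((ν Set.univ).toReal ^ ((2:ℝ)⁻¹)) * ‖h‖ := by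
          rw [ENNReal.toReal_mul, mul_comm, Lp.norm_def]
          congr 1
          · rw [← ENNReal.toReal_rpow]
            norm_num
  let i2 : Lp ℝ 2 ν →L[ℝ] Lp ℝ 1 ν :=
    LinearMap.mkContinuous i2lin _ hi2bound
  let T : Lp ℝ 2 ν →L[ℝ] Lp ℝ 1 μ :=
    ((withDensitySMulLI (E := ℝ) μ hφnm).toContinuousLinearMap).comp i2
  have hT : ∀ h : Lp ℝ 2 ν, (T h : α → ℝ) =ᵐ[μ] fun x => φ x * h x := by
    intro h
    have e1 : (T h : α → ℝ) =ᵐ[μ] fun x => (φn x : ℝ) • ((i2 h) : α → ℝ) x :=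
      (memL1_smul_of_L1_withDensity hφnm (i2 h)).coeFn_toLp
    have e2 : ((i2 h) : α → ℝ) =ᵐ[ν] ⇑h := MemLp.coeFn_toLp (hmem h)
    have e3 : ∀ᵐ x ∂μ, (φn x : ℝ≥0∞) ≠ 0 → ((i2 h) : α → ℝ) x = h x := by
      rw [← ae_withDensity_iff hφnm.coe_nnreal_ennreal]
      exact e2
    filter_upwards [e1, e3, hφpos] with x h1 h3 hpos
    rw [h1]
    have hφn0 : (φn x : ℝ≥0∞) ≠ 0 := by
      simp only [hφn, ne_eq, ENNReal.coe_eq_zero, Real.toNNReal_eq_zero, not_le]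
      exact hpos
    rw [h3 hφn0]
    simp only [smul_eq_mul, hφn]
    rw [Real.coe_toNNReal _ hpos.le]
  -- apply the abstract criterion
  apply weakClosure_isCompact_of_approx
  intro ε hε
  -- choose the truncation level lam
  set lam : ℝ := max 1 ((M/ε) ^ (p-1)⁻¹) with hlam
  have hl1 : (1:ℝ) ≤ lam := le_max_left _ _
  have hl0 : (0:ℝ) < lam := lt_of_lt_of_le one_pos hl1
  have hps : (0:ℝ) < p - 1 := by linarith
  have hlM : lam ^ (1-p) * M ≤ ε := by
    rcases eq_or_lt_of_le hM with hM0 | hM0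
    · rw [← hM0, mul_zero]; exact hε.le
    · have h1 : (M/ε) ^ (p-1)⁻¹ ≤ lam := le_max_right _ _
      have h2 : M/ε ≤ lam ^ (p-1) := by
        have h5 := Real.rpow_le_rpow (Real.rpow_nonneg (by positivity) _) h1 hps.le
        rwa [← Real.rpow_mul (by positivity), inv_mul_cancel₀ hps.ne',
          Real.rpow_one] at h5
      have h3 : lam ^ (1-p) = (lam ^ (p-1))⁻¹ := by
        rw [show (1:ℝ)-p = -(p-1) by ring, Real.rpow_neg hl0.le]
      have h4 : (0:ℝ) < lam ^ (p-1) := Real.rpow_pos_of_pos hl0 _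
      rw [h3]
      rw [div_le_iff₀ hε] at h2
      calc (lam ^ (p-1))⁻¹ * M ≤ (lam ^ (p-1))⁻¹ * (lam ^ (p-1) * ε) := by
            apply mul_le_mul_of_nonneg_left _ (by positivity)
            nlinarith
        _ = ε := by field_simp
  set r : ℝ := lam * ((ν Set.univ).toReal ^ ((2:ℝ)⁻¹)) with hr
  obtain ⟨S, hScpt, hSball⟩ := exists_weakCompact_superset_ball (H := Lp ℝ 2 ν) r
  refine ⟨(WeakSpace.map T) '' S, hScpt.image (WeakSpace.map T).continuous, ?_⟩
  intro f hf
  set f' : Lp ℝ 1 μ := (toWeakSpace ℝ (Lp ℝ 1 μ)).symm f with hf'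
  have hfK : ∫⁻ x, ENNReal.ofReal (|f' x| ^ p * φ x ^ (-(p / q))) ∂μ ≤ ENNReal.ofReal M := hf
  obtain ⟨fm, hfm_meas, hfm_ae⟩ : ∃ fm : α → ℝ, Measurable fm ∧ (⇑f' : α → ℝ) =ᵐ[μ] fm :=
    ⟨(Lp.aestronglyMeasurable f').aemeasurable.mk _,
      (Lp.aestronglyMeasurable f').aemeasurable.measurable_mk,
      (Lp.aestronglyMeasurable f').aemeasurable.ae_eq_mk⟩
  have hfmK : ∫⁻ x, ENNReal.ofReal (|fm x| ^ p * φ x ^ (-(p / q))) ∂μ ≤ ENNReal.ofReal M := by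
    refine le_trans (le_of_eq (lintegral_congr_ae ?_)) hfK
    filter_upwards [hfm_ae] with x hx
    rw [hx]
  set s : Set α := {x | 0 < φ x ∧ |fm x| ≤ lam * φ x} with hs
  have hsm : MeasurableSet s :=
    (measurableSet_lt measurable_const hφm).inter (measurableSet_le hfm_meas.abs
      (hφm.const_mul lam))
  set h0 : α → ℝ := fun x => if x ∈ s then fm x / φ x else 0 with hh0
  have h0m : Measurable h0 := Measurable.ite hsm (hfm_meas.div hφm) measurable_const
  have h0b : ∀ x, |h0 x| ≤ lam := by
    intro x
    rw [hh0]
    by_cases hx : x ∈ s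
    · simp only [hx, if_true]
      obtain ⟨hφx, hfx⟩ := hx
      rw [abs_div, abs_of_pos hφx, div_le_iff₀ hφx]
      exact hfx
    · simp only [hx, if_false, abs_zero]
      exact hl0.le
  have h0mem : MemLp h0 2 ν :=
    MemLp.of_bound h0m.aestronglyMeasurable lam (Filter.Eventually.of_forall h0b)
  set hH : Lp ℝ 2 ν := h0mem.toLp h0 with hhH
  have hHnorm : ‖hH‖ ≤ r := by
    have h1 : eLpNorm h0 2 ν ≤ ν Set.univ ^ (2:ℝ≥0∞).toReal⁻¹ * ENNReal.ofReal lam :=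
      eLpNorm_le_of_ae_bound (Filter.Eventually.of_forall h0b)
    have h2 : ‖hH‖ = (eLpNorm h0 2 ν).toReal := Lp.norm_toLp _ _
    rw [h2, hr]
    calc (eLpNorm h0 2 ν).toReal
        ≤ (ν Set.univ ^ (2:ℝ≥0∞).toReal⁻¹ * ENNReal.ofReal lam).toReal := by
          apply ENNReal.toReal_mono _ h1
          exact ENNReal.mul_ne_top (ENNReal.rpow_ne_top_of_nonneg (by norm_num)
            (measure_ne_top ν _)) ENNReal.ofReal_ne_top
      _ = (ν Set.univ).toReal ^ ((2:ℝ)⁻¹) * lam := by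
          rw [ENNReal.toReal_mul, ENNReal.toReal_ofReal hl0.le, ← ENNReal.toReal_rpow]
          norm_num
      _ = lam * (ν Set.univ).toReal ^ ((2:ℝ)⁻¹) := mul_comm _ _
  refine ⟨(WeakSpace.map T) (toWeakSpace ℝ (Lp ℝ 2 ν) hH),
    ⟨toWeakSpace ℝ (Lp ℝ 2 ν) hH, hSball hH hHnorm, rfl⟩, ?_⟩
  have hsymm : (toWeakSpace ℝ (Lp ℝ 1 μ)).symm ((WeakSpace.map T)
      (toWeakSpace ℝ (Lp ℝ 2 ν) hH)) = T hH := rfl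
  rw [hsymm]
  -- the norm estimate
  have hHcoe : ∀ᵐ x ∂μ, (φn x : ℝ≥0∞) ≠ 0 → (hH : α → ℝ) x = h0 x := by
    rw [← ae_withDensity_iff hφnm.coe_nnreal_ennreal]
    exact h0mem.coeFn_toLp
  have hdiff : (⇑(f' - T hH) : α → ℝ) =ᵐ[μ] fun x => if x ∈ s then 0 else fm x := by
    filter_upwards [Lp.coeFn_sub f' (T hH), hT hH, hHcoe, hfm_ae, hφpos]
      with x h1 h2 h3 h4 h5
    rw [h1, Pi.sub_apply, h2, h4]
    have hφn0 : (φn x : ℝ≥0∞) ≠ 0 := by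
      simp only [hφn, ne_eq, ENNReal.coe_eq_zero, Real.toNNReal_eq_zero, not_le]
      exact h5
    rw [h3 hφn0, hh0]
    by_cases hx : x ∈ s
    · simp only [hx, if_true]
      rw [mul_comm, div_mul_cancel₀ _ h5.ne', sub_self]
    · simp only [hx, if_false, mul_zero, sub_zero]
  have hbound : eLpNorm (fun x => if x ∈ s then 0 else fm x) 1 μ
      ≤ ENNReal.ofReal (lam ^ (1-p)) * ENNReal.ofReal M := by
    rw [eLpNorm_one_eq_lintegral_enorm]
    have hpt : ∀ᵐ x ∂μ, (‖if x ∈ s then 0 else fm x‖₊ : ℝ≥0∞)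
        ≤ ENNReal.ofReal (lam ^ (1-p)) * ENNReal.ofReal (|fm x| ^ p * φ x ^ (-(p/q))) := by
      filter_upwards [hφpos] with x hφx
      by_cases hx : x ∈ s
      · simp [hx]
      · simp only [hx, if_false]
        rw [← enorm_eq_nnnorm, Real.enorm_eq_ofReal_abs, ← ENNReal.ofReal_mul (by positivity)]
        apply ENNReal.ofReal_le_ofReal
        have hgt : lam * φ x < |fm x| := by
          by_contra hle
          exact hx ⟨hφx, not_lt.mp hle⟩
        exact real_trunc_ineq hp hpq2 hl0 hφx hgt
    calc ∫⁻ x, (‖if x ∈ s then 0 else fm x‖₊ : ℝ≥0∞) ∂μ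
        ≤ ∫⁻ x, ENNReal.ofReal (lam ^ (1-p))
            * ENNReal.ofReal (|fm x| ^ p * φ x ^ (-(p/q))) ∂μ :=
          lintegral_mono_ae hpt
      _ = ENNReal.ofReal (lam ^ (1-p))
            * ∫⁻ x, ENNReal.ofReal (|fm x| ^ p * φ x ^ (-(p/q))) ∂μ :=
          lintegral_const_mul' _ _ ENNReal.ofReal_ne_top
      _ ≤ ENNReal.ofReal (lam ^ (1-p)) * ENNReal.ofReal M := mul_le_mul_right hfmK _
  rw [Lp.norm_def, eLpNorm_congr_ae hdiff]
  apply ENNReal.toReal_le_of_le_ofReal hε.le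
  calc eLpNorm (fun x => if x ∈ s then 0 else fm x) 1 μ
      ≤ ENNReal.ofReal (lam ^ (1-p)) * ENNReal.ofReal M := hbound
    _ = ENNReal.ofReal (lam ^ (1-p) * M) := (ENNReal.ofReal_mul (by positivity)).symm
    _ ≤ ENNReal.ofReal ε := ENNReal.ofReal_le_ofReal hlM
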